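/- Let K be an m×n real matrix such that KKᵀ ⪰ μ·Iₘ for some μ > 0, and let p > 0. Then the block matrix [[(1+p)·Iₙ, Kᵀ], [K, KKᵀ]] satisfies [[(1+p)·Iₙ, Kᵀ], [K, KKᵀ]] ⪰ (μp/(μ+p+1)) · I_{n+m}. -/

import Mathlib

open Matrix

/-- The spectral (operator 2-) norm of a real matrix. -/
noncomputable def opNorm {m n : ℕ} (K : Matrix (Fin m) (Fin n) ℝ) : ℝ :=
  ‖LinearMap.toContinuousLinearMap (Matrix.toEuclideanLin K)‖

private lemma psd_smul {k : Type*} [Fintype k] {M : Matrix k k ℝ} (hM : M.PosSemidef)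
    {a : ℝ} (ha : 0 ≤ a) : (a • M).PosSemidef := by
  refine posSemidef_iff_dotProduct_mulVec.mpr ⟨?_, fun x => ?_⟩
  · unfold Matrix.IsHermitian
    rw [conjTranspose_smul, hM.1.eq]
    simp
  · rw [smul_mulVec, dotProduct_smul, smul_eq_mul]
    exact mul_nonneg ha ((posSemidef_iff_dotProduct_mulVec.mp hM).2 x)

private lemma psd_smul_one {k : Type*} [Fintype k] [DecidableEq k]
    {a : ℝ} (ha : 0 ≤ a) : (a • (1 : Matrix k k ℝ)).PosSemidef :=
  psd_smul Matrix.PosSemidef.one ha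

theorem stmt1 {m n : ℕ} (K : Matrix (Fin m) (Fin n) ℝ) (μ p : ℝ)
    (hμ : 0 < μ) (hp : 0 < p)
    (hK : (K * Kᵀ - μ • 1).PosSemidef) :
    (Matrix.fromBlocks ((1 + p) • (1 : Matrix (Fin n) (Fin n) ℝ)) Kᵀ K (K * Kᵀ)
      - (μ * p / (μ + p + 1)) • 1).PosSemidef := by
  set c : ℝ := μ * p / (μ + p + 1) with hc
  have hden : (0:ℝ) < μ + p + 1 := by linarith
  have hcval : c * (μ + p + 1) = μ * p := by
    rw [hc]; field_simp
  have hc0 : 0 < c := div_pos (mul_pos hμ hp) hden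
  have hcp : c < p := by nlinarith
  have hA : (0:ℝ) < 1 + p - c := by linarith
  -- rewrite the matrix as a block matrix
  have hrw : (Matrix.fromBlocks ((1 + p) • (1 : Matrix (Fin n) (Fin n) ℝ)) Kᵀ K (K * Kᵀ)
      - c • 1)
      = Matrix.fromBlocks ((1 + p - c) • (1 : Matrix (Fin n) (Fin n) ℝ)) Kᵀ K
          (K * Kᵀ - c • (1 : Matrix (Fin m) (Fin m) ℝ)) := by
    rw [← Matrix.fromBlocks_one, Matrix.fromBlocks_smul,
      sub_eq_add_neg, Matrix.fromBlocks_neg, Matrix.fromBlocks_add]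
    congr 1 <;> simp [add_smul, neg_smul, sub_eq_add_neg]
  rw [hrw]
  -- Schur complement argument
  have hApd : ((1 + p - c) • (1 : Matrix (Fin n) (Fin n) ℝ)).PosDef := by
    refine posDef_iff_dotProduct_mulVec.mpr ⟨(psd_smul_one hA.le).1, fun x hx => ?_⟩
    rw [smul_mulVec, dotProduct_smul, one_mulVec, smul_eq_mul]
    have : 0 < star x ⬝ᵥ x := by
      simpa using Matrix.dotProduct_star_self_pos_iff.mpr hx
    exact mul_pos hA this
  haveI : Invertible ((1 + p - c) • (1 : Matrix (Fin n) (Fin n) ℝ)) :=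
    ⟨(1 + p - c)⁻¹ • 1, by
      rw [Matrix.smul_mul, Matrix.mul_smul, one_mul, smul_smul, inv_mul_cancel₀ hA.ne', one_smul],
      by
      rw [Matrix.smul_mul, Matrix.mul_smul, one_mul, smul_smul, mul_inv_cancel₀ hA.ne', one_smul]⟩
  have hinv : ((1 + p - c) • (1 : Matrix (Fin n) (Fin n) ℝ))⁻¹ = (1 + p - c)⁻¹ • 1 :=
    Matrix.inv_eq_right_inv (by
      rw [Matrix.smul_mul, Matrix.mul_smul, one_mul, smul_smul, mul_inv_cancel₀ hA.ne', one_smul])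
  have hKH : (Kᵀ)ᴴ = K := by
    ext i j; simp [Matrix.conjTranspose_apply]
  rw [show (Matrix.fromBlocks ((1 + p - c) • (1 : Matrix (Fin n) (Fin n) ℝ)) Kᵀ K
      (K * Kᵀ - c • (1 : Matrix (Fin m) (Fin m) ℝ)))
      = Matrix.fromBlocks ((1 + p - c) • (1 : Matrix (Fin n) (Fin n) ℝ)) Kᵀ (Kᵀ)ᴴ
      (K * Kᵀ - c • (1 : Matrix (Fin m) (Fin m) ℝ)) by rw [hKH]]
  rw [Matrix.PosDef.fromBlocks₁₁ _ _ hApd]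
  rw [hKH, hinv]
  -- now show the Schur complement is PSD
  set a : ℝ := 1 - (1 + p - c)⁻¹ with ha
  have ha0 : 0 ≤ a := by
    rw [ha, sub_nonneg]
    rw [inv_le_one_iff₀]
    right; linarith
  have key : K * Kᵀ - c • (1 : Matrix (Fin m) (Fin m) ℝ) - K * ((1 + p - c)⁻¹ • (1 : Matrix (Fin n) (Fin n) ℝ)) * Kᵀ
      = a • (K * Kᵀ - μ • 1) + (a * μ - c) • (1 : Matrix (Fin m) (Fin m) ℝ) := by
    rw [Matrix.mul_smul, Matrix.smul_mul, Matrix.mul_one]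
    rw [smul_sub, smul_smul, sub_smul, ha]
    module
  rw [key]
  have hamc : 0 ≤ a * μ - c := by
    have h1 : a = (p - c) / (1 + p - c) := by
      rw [ha]
      field_simp
      ring
    rw [h1]
    rw [sub_nonneg, div_mul_eq_mul_div, le_div_iff₀ hA]
    nlinarith [hcval, hc0, hcp, hμ, hp]
  exact (psd_smul hK ha0).add (psd_smul_one hamc)
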